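/- Suppose M > L_g‖L_p‖ and (x_k)_{k≥0} is a RHOTA sequence. Then Σ_{k=0}^{∞} ‖x_{k+1} − x_k‖^{p+1} ≤ (p+1)!(f(x_0) − f^*)/(M − L_g‖L_p‖) < ∞, hence ‖x_{k+1} − x_k‖ → 0 as k → ∞, and for every k ≥ 0 one has min_{j=0,…,k} ‖x_{j+1} − x_j‖^{p+1} ≤ (f(x_0) − f^*)(p+1)!/((M − L_g‖L_p‖)(k+1)). -/

import Mathlib

open scoped BigOperators RealInnerProductSpace

noncomputable section

/-- The vector `(F_1(x), …, F_m(x)) ∈ ℝ^m` (with the Euclidean norm). -/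
def euclMap {n m : ℕ} (F : Fin m → EuclideanSpace ℝ (Fin n) → ℝ)
    (x : EuclideanSpace ℝ (Fin n)) : EuclideanSpace ℝ (Fin m) :=
  (EuclideanSpace.equiv (Fin m) ℝ).symm fun i => F i x

/-- The vector `T_p^F(y; x)` of `p`-th order Taylor approximations of the components
`F_i` around the center `x`, evaluated at `y`. -/
def taylorMap (p : ℕ) {n m : ℕ} (F : Fin m → EuclideanSpace ℝ (Fin n) → ℝ)
    (y x : EuclideanSpace ℝ (Fin n)) : EuclideanSpace ℝ (Fin m) :=
  (EuclideanSpace.equiv (Fin m) ℝ).symm fun i =>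
    ∑ j ∈ Finset.range (p + 1),
      (1 / (Nat.factorial j : ℝ)) * iteratedFDeriv ℝ j (F i) x (fun _ => y - x)

/-- The composite objective `f(x) = g(F(x)) + h(x)`. -/
def fObj {n m : ℕ} (F : Fin m → EuclideanSpace ℝ (Fin n) → ℝ)
    (g : EuclideanSpace ℝ (Fin m) → ℝ) (h : EuclideanSpace ℝ (Fin n) → ℝ)
    (x : EuclideanSpace ℝ (Fin n)) : ℝ :=
  g (euclMap F x) + h x

/-- The regularized higher-order Taylor model
`s_M(y; x̄) = g(T_p^F(y; x̄)) + (M/(p+1)!)‖y − x̄‖^{p+1} + h(y)`. -/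
def sModel (p : ℕ) {n m : ℕ} (F : Fin m → EuclideanSpace ℝ (Fin n) → ℝ)
    (g : EuclideanSpace ℝ (Fin m) → ℝ) (h : EuclideanSpace ℝ (Fin n) → ℝ) (M : ℝ)
    (y xb : EuclideanSpace ℝ (Fin n)) : ℝ :=
  g (taylorMap p F y xb) + M / (Nat.factorial (p + 1) : ℝ) * ‖y - xb‖ ^ (p + 1) + h y


open Filter Finset in
lemma int_bound {r r' : ℝ → ℝ} (hcont : Continuous r') (hder : ∀ t, HasDerivAt r (r' t) t)
    (x y : ℝ) (q : ℕ) (K : ℝ) (hb : ∀ t, |r' t| ≤ K * |t - x| ^ q) :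
    |r y - r x| ≤ K * |y - x| ^ (q + 1) / (q + 1) := by
  have hftc : ∫ t in x..y, r' t = r y - r x :=
    intervalIntegral.integral_eq_sub_of_hasDerivAt (fun t _ => hder t)
      (hcont.intervalIntegrable x y)
  rcases le_total x y with hxy | hxy
  · have h1 : |r y - r x| ≤ ∫ t in x..y, |r' t| := by
      rw [← hftc]
      simpa using intervalIntegral.norm_integral_le_integral_norm (f := r') hxy
    have h2 : (∫ t in x..y, |r' t|) ≤ ∫ t in x..y, K * (t - x) ^ q := by
      apply intervalIntegral.integral_mono_on hxy
        (hcont.abs.intervalIntegrable x y)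
        (((continuous_const.mul ((continuous_id.sub continuous_const).pow q)).intervalIntegrable x y))
      intro t ht
      calc |r' t| ≤ K * |t - x| ^ q := hb t
        _ = K * (t - x) ^ q := by rw [abs_of_nonneg (by linarith [ht.1])]
    have h3 : (∫ t in x..y, K * (t - x) ^ q) = K * (y - x) ^ (q + 1) / (q + 1) := by
      rw [intervalIntegral.integral_const_mul]
      have := intervalIntegral.integral_comp_sub_right (a := x) (b := y) (fun t => t ^ q) x
      rw [this, integral_pow]
      simp
      ring
    rw [h3] at h2
    calc |r y - r x| ≤ K * (y - x) ^ (q+1) / (q+1) := le_trans h1 h2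
      _ = K * |y - x| ^ (q+1) / (q+1) := by rw [abs_of_nonneg (by linarith)]
  · have h1 : |r y - r x| ≤ ∫ t in y..x, |r' t| := by
      have : r y - r x = -(∫ t in y..x, r' t) := by
        rw [← intervalIntegral.integral_symm, hftc]
      rw [this, abs_neg]
      simpa using intervalIntegral.norm_integral_le_integral_norm (f := r') hxy
    have h2 : (∫ t in y..x, |r' t|) ≤ ∫ t in y..x, K * (x - t) ^ q := by
      apply intervalIntegral.integral_mono_on hxy
        (hcont.abs.intervalIntegrable y x)
        (((continuous_const.mul ((continuous_const.sub continuous_id).pow q)).intervalIntegrable y x))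
      intro t ht
      calc |r' t| ≤ K * |t - x| ^ q := hb t
        _ = K * (x - t) ^ q := by rw [abs_sub_comm, abs_of_nonneg (by linarith [ht.2])]
    have h3 : (∫ t in y..x, K * (x - t) ^ q) = K * (x - y) ^ (q + 1) / (q + 1) := by
      rw [intervalIntegral.integral_const_mul]
      have := intervalIntegral.integral_comp_sub_left (a := y) (b := x) (fun t => t ^ q) x
      rw [this, integral_pow]
      simp
      ring
    rw [h3] at h2
    calc |r y - r x| ≤ K * (x - y) ^ (q+1) / (q+1) := le_trans h1 h2
      _ = K * |y - x| ^ (q+1) / (q+1) := by rw [abs_sub_comm, abs_of_nonneg (by linarith)]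

open Filter Finset in
lemma taylor1d : ∀ (p : ℕ) (f : ℝ → ℝ), ContDiff ℝ p f → ∀ (L x : ℝ),
    (∀ s t : ℝ, |iteratedDeriv p f s - iteratedDeriv p f t| ≤ L * |s - t|) →
    ∀ y : ℝ, |f y - ∑ j ∈ range (p + 1), (y - x) ^ j / (Nat.factorial j : ℝ) * iteratedDeriv j f x|
      ≤ L * |y - x| ^ (p + 1) / (Nat.factorial (p + 1) : ℝ) := by
  intro p
  induction p with
  | zero =>
    intro f hf L x hL y
    simpa [iteratedDeriv_zero] using hL y x
  | succ p IH =>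
    intro f hf L x hL y
    set f' := deriv f with hf'def
    have hf2 : ContDiff ℝ ((p : ℕ∞) + 1) f := by exact_mod_cast hf
    have hf1 : ContDiff ℝ p f' := (contDiff_succ_iff_deriv.mp hf2).2.2
    have hdiff : Differentiable ℝ f := (contDiff_succ_iff_deriv.mp hf2).1
    have hL' : ∀ s t : ℝ, |iteratedDeriv p f' s - iteratedDeriv p f' t| ≤ L * |s - t| := by
      intro s t
      have : iteratedDeriv p f' = iteratedDeriv (p + 1) f := (iteratedDeriv_succ' ..).symm
      rw [this]; exact hL s t
    -- the remainder function and its derivative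
    set r : ℝ → ℝ := fun t =>
      f t - ∑ j ∈ range (p + 2), (t - x) ^ j / (Nat.factorial j : ℝ) * iteratedDeriv j f x with hrdef
    set r' : ℝ → ℝ := fun t =>
      f' t - ∑ j ∈ range (p + 1), (t - x) ^ j / (Nat.factorial j : ℝ) * iteratedDeriv j f' x
      with hr'def
    have hder : ∀ t, HasDerivAt r (r' t) t := by
      intro t
      have hpoly : ∀ j ∈ range (p + 2), HasDerivAt
          (fun t : ℝ => (t - x) ^ j / (Nat.factorial j : ℝ) * iteratedDeriv j f x)
          ((j : ℝ) * (t - x) ^ (j - 1) / (Nat.factorial j : ℝ) * iteratedDeriv j f x) t := by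
        intro j _
        have h1 : HasDerivAt (fun t : ℝ => (t - x) ^ j) ((j : ℝ) * (t - x) ^ (j - 1)) t := by
          simpa using ((hasDerivAt_id' t).sub_const x).fun_pow j
        simpa [div_eq_mul_inv, mul_comm, mul_assoc, mul_left_comm] using
          (h1.mul_const ((Nat.factorial j : ℝ)⁻¹)).mul_const (iteratedDeriv j f x)
      have hsum := HasDerivAt.fun_sum hpoly
      have hfd : HasDerivAt f (f' t) t := (hdiff t).hasDerivAt
      have := hfd.sub hsum
      convert this using 1
      · rfl
      · rfl
      · rfl
      rw [Finset.sum_range_succ']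
      have hterms : ∀ j : ℕ, ((j + 1 : ℕ) : ℝ) * (t - x) ^ ((j + 1) - 1) / (Nat.factorial (j + 1) : ℝ)
            * iteratedDeriv (j + 1) f x
          = (t - x) ^ j / (Nat.factorial j : ℝ) * iteratedDeriv j f' x := by
        intro j
        have h0 : iteratedDeriv (j + 1) f x = iteratedDeriv j f' x := by
          rw [iteratedDeriv_succ']
        rw [h0, Nat.add_sub_cancel, Nat.factorial_succ]
        have hfj : (Nat.factorial j : ℝ) ≠ 0 := Nat.cast_ne_zero.mpr (Nat.factorial_ne_zero j)
        have hj1 : ((j : ℝ) + 1) ≠ 0 := by positivity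
        push_cast
        field_simp
      simp only [hterms]
      simp [r']
    have hb : ∀ t, |r' t| ≤ (L / (Nat.factorial (p + 1) : ℝ)) * |t - x| ^ (p + 1) := by
      intro t
      have := IH f' hf1 L x hL' t
      simp only [hr'def]
      calc |f' t - ∑ j ∈ range (p + 1), (t - x) ^ j / (Nat.factorial j : ℝ) * iteratedDeriv j f' x|
          ≤ L * |t - x| ^ (p + 1) / (Nat.factorial (p + 1) : ℝ) := this
        _ = (L / (Nat.factorial (p + 1) : ℝ)) * |t - x| ^ (p + 1) := by ring
    have hcont : Continuous r' := by
      have : Continuous f' := hf1.continuous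
      apply this.sub
      exact continuous_finset_sum _ (fun j _ =>
        (((continuous_id.sub continuous_const).pow j).div_const _).mul continuous_const)
    have hrx : r x = 0 := by
      simp only [hrdef]
      rw [Finset.sum_eq_single 0]
      · simp
      · intro j _ hj
        simp [zero_pow hj]
      · simp
    have := int_bound hcont hder x y (p + 1) (L / (Nat.factorial (p + 1) : ℝ)) hb
    rw [hrx, sub_zero] at this
    calc |f y - ∑ j ∈ range (p + 1 + 1), (y - x) ^ j / (Nat.factorial j : ℝ) * iteratedDeriv j f x|
        = |r y| := rfl
      _ ≤ (L / (Nat.factorial (p + 1) : ℝ)) * |y - x| ^ (p + 1 + 1) / (((p + 1 : ℕ) : ℝ) + 1) :=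
          this
      _ = L * |y - x| ^ (p + 1 + 1) / (Nat.factorial (p + 1 + 1) : ℝ) := by
          rw [Nat.factorial_succ (p + 1), div_mul_eq_mul_div, div_div]
          congr 1
          push_cast
          ring

open Filter Finset in
lemma line_iteratedDeriv {E : Type*} [NormedAddCommGroup E] [NormedSpace ℝ E]
    (j : ℕ) (f : E → ℝ) (hf : ContDiff ℝ j f) (x d : E) (t : ℝ) :
    iteratedDeriv j (fun s : ℝ => f (x + s • d)) t
      = iteratedFDeriv ℝ j f (x + t • d) (fun _ => d) := by
  induction j generalizing f with
  | zero => simp [iteratedDeriv_zero]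
  | succ j IH =>
    have hderiv : (deriv fun s : ℝ => f (x + s • d))
        = fun s : ℝ => fderiv ℝ f (x + s • d) d := by
      funext s
      have hline : HasDerivAt (fun s : ℝ => x + s • d) d s := by
        simpa using ((hasDerivAt_id s).smul_const d).const_add x
      have hF : HasFDerivAt f (fderiv ℝ f (x + s • d)) (x + s • d) :=
        (hf.differentiable (by simp)).differentiableAt.hasFDerivAt
      exact (hF.comp_hasDerivAt s hline).deriv
    rw [iteratedDeriv_succ', hderiv]
    set c : (E →L[ℝ] ℝ) →L[ℝ] ℝ := ContinuousLinearMap.apply ℝ ℝ d with hc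
    have hf' : ContDiff ℝ j (fderiv ℝ f) :=
      hf.fderiv_right (by exact_mod_cast le_refl (j+1))
    have : (fun s : ℝ => fderiv ℝ f (x + s • d) d)
        = fun s : ℝ => (c ∘ (fderiv ℝ f)) (x + s • d) := rfl
    rw [this, IH _ (c.contDiff.comp hf')]
    rw [c.iteratedFDeriv_comp_left (hf'.contDiffAt (x := x + t • d)) le_rfl]
    have := iteratedFDeriv_succ_apply_right (𝕜 := ℝ) (f := f) (x := x + t • d)
      (fun _ : Fin (j+1) => d)
    rw [this]
    rfl

open Filter Finset in
lemma taylorE {E : Type*} [NormedAddCommGroup E] [NormedSpace ℝ E]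
    (p : ℕ) (f : E → ℝ) (hf : ContDiff ℝ p f) (L : ℝ)
    (hLip : ∀ a b : E, ‖iteratedFDeriv ℝ p f a - iteratedFDeriv ℝ p f b‖ ≤ L * ‖a - b‖)
    (x y : E) :
    |f y - ∑ j ∈ range (p + 1),
        (1 / (Nat.factorial j : ℝ)) * iteratedFDeriv ℝ j f x (fun _ => y - x)|
      ≤ L * ‖y - x‖ ^ (p + 1) / (Nat.factorial (p + 1) : ℝ) := by
  set d := y - x with hd
  set φ : ℝ → ℝ := fun s => f (x + s • d) with hφdef
  have hline : ContDiff ℝ p (fun s : ℝ => x + s • d) :=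
    contDiff_const.add (contDiff_id.smul contDiff_const)
  have hφ : ContDiff ℝ p φ := hf.comp hline
  have hLip' : ∀ s t : ℝ, |iteratedDeriv p φ s - iteratedDeriv p φ t|
      ≤ (L * ‖d‖ * ‖d‖ ^ p) * |s - t| := by
    intro s t
    rw [line_iteratedDeriv p f hf x d s, line_iteratedDeriv p f hf x d t]
    have h1 : iteratedFDeriv ℝ p f (x + s • d) (fun _ => d)
          - iteratedFDeriv ℝ p f (x + t • d) (fun _ => d)
        = (iteratedFDeriv ℝ p f (x + s • d) - iteratedFDeriv ℝ p f (x + t • d))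
            (fun _ => d) := rfl
    rw [h1]
    calc |(iteratedFDeriv ℝ p f (x + s • d) - iteratedFDeriv ℝ p f (x + t • d)) (fun _ => d)|
        ≤ ‖iteratedFDeriv ℝ p f (x + s • d) - iteratedFDeriv ℝ p f (x + t • d)‖
            * ∏ _i : Fin p, ‖d‖ := by
          exact (iteratedFDeriv ℝ p f (x + s • d) - iteratedFDeriv ℝ p f (x + t • d)).le_opNorm _
      _ ≤ (L * ‖(x + s • d) - (x + t • d)‖) * ‖d‖ ^ p := by
          simp only [Finset.prod_const, Finset.card_univ, Fintype.card_fin]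
          exact mul_le_mul_of_nonneg_right (hLip _ _) (by positivity)
      _ = (L * ‖d‖ * ‖d‖ ^ p) * |s - t| := by
          have : (x + s • d) - (x + t • d) = (s - t) • d := by
            rw [sub_smul]; abel
          rw [this, norm_smul]
          simp [Real.norm_eq_abs]
          ring
  have key := taylor1d p φ hφ (L * ‖d‖ * ‖d‖ ^ p) 0 hLip' 1
  have hφ1 : φ 1 = f y := by simp [hφdef, hd]
  have hterm : ∀ j ∈ range (p + 1),
      (1 - (0:ℝ)) ^ j / (Nat.factorial j : ℝ) * iteratedDeriv j φ 0
        = (1 / (Nat.factorial j : ℝ)) * iteratedFDeriv ℝ j f x (fun _ => d) := by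
    intro j hj
    have hj' : (j : ℕ) ≤ p := Nat.lt_succ_iff.mp (Finset.mem_range.mp hj)
    rw [line_iteratedDeriv j f (hf.of_le (by exact_mod_cast hj')) x d 0]
    simp
  rw [hφ1, Finset.sum_congr rfl hterm] at key
  calc |f y - ∑ j ∈ range (p + 1), (1 / (Nat.factorial j : ℝ))
          * iteratedFDeriv ℝ j f x (fun _ => d)|
      ≤ (L * ‖d‖ * ‖d‖ ^ p) * |1 - (0:ℝ)| ^ (p + 1) / (Nat.factorial (p + 1) : ℝ) := key
    _ = L * ‖d‖ ^ (p + 1) / (Nat.factorial (p + 1) : ℝ) := by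
        simp [pow_succ]
        ring

open Filter Finset in
lemma my_normbound {m : ℕ} (v Lp : EuclideanSpace ℝ (Fin m)) (c : ℝ) (hc : 0 ≤ c)
    (hcomp : ∀ i, |v i| ≤ Lp i * c) : ‖v‖ ≤ ‖Lp‖ * c := by
  rw [EuclideanSpace.norm_eq, EuclideanSpace.norm_eq]
  have h1 : ∀ i ∈ Finset.univ, ‖v i‖ ^ 2 ≤ (‖Lp i‖ * c) ^ 2 := by
    intro i _
    rw [Real.norm_eq_abs, Real.norm_eq_abs]
    have h2 : |v i| ≤ |Lp i| * c :=
      (hcomp i).trans (mul_le_mul_of_nonneg_right (le_abs_self _) hc)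
    exact pow_le_pow_left₀ (abs_nonneg _) h2 2
  calc Real.sqrt (∑ i, ‖v i‖ ^ 2) ≤ Real.sqrt (∑ i, (‖Lp i‖ * c) ^ 2) :=
        Real.sqrt_le_sqrt (Finset.sum_le_sum h1)
    _ = Real.sqrt ((∑ i, ‖Lp i‖ ^ 2) * c ^ 2) := by
        rw [Finset.sum_mul]
        congr 1
        apply Finset.sum_congr rfl
        intro i _
        rw [mul_pow]
    _ = Real.sqrt (∑ i, ‖Lp i‖ ^ 2) * c := by
        rw [Real.sqrt_mul (by positivity), Real.sqrt_sq hc]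


/-- summability of the step sizes, convergence of steps to zero,
and the `O(1/k)` rate for the minimal step along a RHOTA sequence. -/
theorem stmt2 {n m : ℕ} (hn : 1 ≤ n) (hm : 1 ≤ m) (p : ℕ) (hp : 1 ≤ p)
    (F : Fin m → EuclideanSpace ℝ (Fin n) → ℝ)
    (Lp : EuclideanSpace ℝ (Fin m))
    (hFd : ∀ i, ContDiff ℝ p (F i))
    (hFlip : ∀ i (x y : EuclideanSpace ℝ (Fin n)),
      ‖iteratedFDeriv ℝ p (F i) x - iteratedFDeriv ℝ p (F i) y‖ ≤ Lp i * ‖x - y‖)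
    (g : EuclideanSpace ℝ (Fin m) → ℝ) (Lg : ℝ)
    (hgconv : ConvexOn ℝ Set.univ g)
    (hglip : ∀ a b : EuclideanSpace ℝ (Fin m), |g a - g b| ≤ Lg * ‖a - b‖)
    (C : Set (EuclideanSpace ℝ (Fin n))) (hCne : C.Nonempty) (hCcl : IsClosed C)
    (hCcv : Convex ℝ C)
    (h : EuclideanSpace ℝ (Fin n) → ℝ) (hhconv : ConvexOn ℝ Set.univ h)
    (hhlsc : LowerSemicontinuous h)
    (fstar : ℝ) (hlb : ∀ x ∈ C, fstar ≤ fObj F g h x)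
    (M : ℝ) (hM : Lg * ‖Lp‖ < M)
    (x : ℕ → EuclideanSpace ℝ (Fin n)) (hxC : ∀ k, x k ∈ C)
    (hdes : ∀ k, sModel p F g h M (x (k + 1)) (x k) ≤ sModel p F g h M (x k) (x k)) :
    Summable (fun k => ‖x (k + 1) - x k‖ ^ (p + 1)) ∧
    (∑' k : ℕ, ‖x (k + 1) - x k‖ ^ (p + 1)) ≤
      (Nat.factorial (p + 1) : ℝ) * (fObj F g h (x 0) - fstar) / (M - Lg * ‖Lp‖) ∧
    Filter.Tendsto (fun k => ‖x (k + 1) - x k‖) Filter.atTop (nhds 0) ∧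
    ∀ k : ℕ, ∃ j ≤ k, ‖x (j + 1) - x j‖ ^ (p + 1) ≤
      (fObj F g h (x 0) - fstar) * (Nat.factorial (p + 1) : ℝ) /
        ((M - Lg * ‖Lp‖) * (k + 1)) := by
  set β : ℝ := M - Lg * ‖Lp‖ with hβ
  have hβpos : 0 < β := by simp [hβ]; linarith
  have hfacpos : (0:ℝ) < (Nat.factorial (p + 1) : ℝ) := by
    exact_mod_cast Nat.factorial_pos (p + 1)
  set α : ℝ := β / (Nat.factorial (p + 1) : ℝ) with hα
  have hαpos : 0 < α := div_pos hβpos hfacpos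
  set D : ℕ → ℝ := fun k => ‖x (k + 1) - x k‖ with hD
  have hD0 : ∀ k, 0 ≤ D k := fun k => norm_nonneg _
  -- Lg ≥ 0
  have hLg0 : 0 ≤ Lg := by
    have i0 : Fin m := ⟨0, hm⟩
    have ha : ‖(EuclideanSpace.single i0 (1:ℝ)) - 0‖ = 1 := by
      simp [EuclideanSpace.norm_single]
    have := hglip (EuclideanSpace.single i0 (1:ℝ)) 0
    rw [ha, mul_one] at this
    exact le_trans (abs_nonneg _) this
  -- diagonal of the model equals the objective
  have hdiag : ∀ z, sModel p F g h M z z = fObj F g h z := by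
    intro z
    have htay : taylorMap p F z z = euclMap F z := by
      unfold taylorMap euclMap
      congr 1
      funext i
      rw [Finset.sum_eq_single 0]
      · simp
      · intro j _ hj
        have hz : (fun _ : Fin j => z - z) = fun _ => (0 : EuclideanSpace ℝ (Fin n)) := by
          funext _; simp
        rw [hz]
        obtain ⟨j', rfl⟩ := Nat.exists_eq_succ_of_ne_zero hj
        rw [(iteratedFDeriv ℝ (j' + 1) (F i) z).map_coord_zero (0 : Fin (j' + 1)) rfl]
        ring
      · simp
    rw [sModel, htay, fObj]
    simp
  -- key per-step descent
  have hstep : ∀ k, fObj F g h (x (k + 1)) + α * D k ^ (p + 1) ≤ fObj F g h (x k) := by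
    intro k
    set c : ℝ := D k ^ (p + 1) / (Nat.factorial (p + 1) : ℝ) with hc
    have hc0 : 0 ≤ c := by positivity
    have hcomp : ∀ i, |(euclMap F (x (k+1)) - taylorMap p F (x (k+1)) (x k)) i| ≤ Lp i * c := by
      intro i
      have := taylorE p (F i) (hFd i) (Lp i) (hFlip i) (x k) (x (k+1))
      have heq : (euclMap F (x (k+1)) - taylorMap p F (x (k+1)) (x k)) i
          = F i (x (k+1)) - ∑ j ∈ Finset.range (p + 1),
              (1 / (Nat.factorial j : ℝ)) * iteratedFDeriv ℝ j (F i) (x k)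
                (fun _ => x (k+1) - x k) := rfl
      rw [heq]
      calc _ ≤ Lp i * ‖x (k+1) - x k‖ ^ (p + 1) / (Nat.factorial (p+1) : ℝ) := this
        _ = Lp i * c := by rw [hc, hD]; ring
    have hnorm : ‖euclMap F (x (k+1)) - taylorMap p F (x (k+1)) (x k)‖ ≤ ‖Lp‖ * c :=
      my_normbound _ Lp c hc0 hcomp
    have hg : g (euclMap F (x (k+1))) ≤ g (taylorMap p F (x (k+1)) (x k)) + Lg * (‖Lp‖ * c) := by
      have h1 := hglip (euclMap F (x (k+1))) (taylorMap p F (x (k+1)) (x k))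
      have h2 : g (euclMap F (x (k+1))) - g (taylorMap p F (x (k+1)) (x k))
          ≤ Lg * ‖euclMap F (x (k+1)) - taylorMap p F (x (k+1)) (x k)‖ :=
        le_trans (le_abs_self _) h1
      have h3 : Lg * ‖euclMap F (x (k+1)) - taylorMap p F (x (k+1)) (x k)‖ ≤ Lg * (‖Lp‖ * c) :=
        mul_le_mul_of_nonneg_left hnorm hLg0
      linarith
    have hdes' := hdes k
    rw [hdiag (x k)] at hdes'
    have hexp : sModel p F g h M (x (k+1)) (x k)
        = g (taylorMap p F (x (k+1)) (x k)) + M * c + h (x (k+1)) := by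
      rw [sModel, hc, hD]
      ring
    have hfobj : fObj F g h (x (k+1)) = g (euclMap F (x (k+1))) + h (x (k+1)) := rfl
    have hαc : α * D k ^ (p + 1) = (M - Lg * ‖Lp‖) * c := by
      rw [hα, hc, hβ]; ring
    rw [hfobj, hαc]
    have : g (taylorMap p F (x (k+1)) (x k)) + M * c + h (x (k+1)) ≤ fObj F g h (x k) := by
      rw [← hexp]; exact hdes'
    nlinarith [hg]
  -- telescoping
  have htelesc : ∀ K : ℕ, ∑ k ∈ Finset.range K, α * D k ^ (p + 1)
      ≤ fObj F g h (x 0) - fObj F g h (x K) := by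
    intro K
    induction K with
    | zero => simp
    | succ K IH =>
      rw [Finset.sum_range_succ]
      have := hstep K
      linarith
  have hbound : ∀ K : ℕ, ∑ k ∈ Finset.range K, D k ^ (p + 1) ≤ (fObj F g h (x 0) - fstar) / α := by
    intro K
    have h1 := htelesc K
    have h2 := hlb (x K) (hxC K)
    have h3 : α * ∑ k ∈ Finset.range K, D k ^ (p + 1) ≤ fObj F g h (x 0) - fstar := by
      rw [Finset.mul_sum]
      linarith
    rw [le_div_iff₀ hαpos]
    linarith [h3]
  have hsummable : Summable (fun k => D k ^ (p + 1)) :=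
    summable_of_sum_range_le (fun k => by positivity) hbound
  have hSeq : (fObj F g h (x 0) - fstar) / α
      = (Nat.factorial (p + 1) : ℝ) * (fObj F g h (x 0) - fstar) / β := by
    rw [hα]
    field_simp
  refine ⟨hsummable, ?_, ?_, ?_⟩
  · have := Summable.tsum_le_of_sum_range_le (f := fun k => D k ^ (p+1))
      (c := (fObj F g h (x 0) - fstar) / α) hsummable hbound
    rw [hSeq] at this
    exact this
  · have h1 : Filter.Tendsto (fun k => D k ^ (p + 1)) Filter.atTop (nhds 0) :=
      hsummable.tendsto_atTop_zero
    have h2 : Filter.Tendsto (fun k => (D k ^ (p + 1)) ^ ((p + 1 : ℝ)⁻¹))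
        Filter.atTop (nhds ((0:ℝ) ^ ((p + 1 : ℝ)⁻¹))) :=
      h1.rpow_const (Or.inr (by positivity))
    rw [Real.zero_rpow (by positivity)] at h2
    apply h2.congr
    intro k
    rw [← Real.rpow_natCast (D k) (p + 1), ← Real.rpow_mul (hD0 k)]
    rw [show ((p : ℕ) + 1 : ℕ) = (p + 1 : ℕ) from rfl]
    push_cast
    rw [mul_inv_cancel₀ (by positivity), Real.rpow_one]
  · intro k
    obtain ⟨j, hj, hjmin⟩ := Finset.exists_min_image (Finset.range (k + 1))
      (fun j => D j ^ (p + 1)) ⟨0, Finset.mem_range.mpr (Nat.succ_pos k)⟩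
    refine ⟨j, Nat.lt_succ_iff.mp (Finset.mem_range.mp hj), ?_⟩
    have hcard : (k + 1 : ℝ) * (D j ^ (p + 1)) ≤ ∑ i ∈ Finset.range (k + 1), D i ^ (p + 1) := by
      have := Finset.card_nsmul_le_sum (Finset.range (k + 1))
        (fun i => D i ^ (p + 1)) (D j ^ (p + 1)) (fun i hi => hjmin i hi)
      simpa [nsmul_eq_mul] using this
    have h1 : (k + 1 : ℝ) * (D j ^ (p + 1)) ≤ (fObj F g h (x 0) - fstar) / α :=
      le_trans hcard (hbound (k + 1))
    have hk1 : (0:ℝ) < (k + 1 : ℝ) := by positivity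
    rw [le_div_iff₀ hαpos] at h1
    rw [le_div_iff₀ (mul_pos hβpos hk1)]
    calc D j ^ (p + 1) * (β * ((k:ℝ) + 1))
        = ((k:ℝ) + 1) * D j ^ (p + 1) * α * (Nat.factorial (p + 1) : ℝ) := by
          rw [hα]; field_simp
      _ ≤ (fObj F g h (x 0) - fstar) * (Nat.factorial (p + 1) : ℝ) :=
          mul_le_mul_of_nonneg_right h1 (le_of_lt hfacpos)

end
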